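/- For an N-th order interpolating wavelet transform applied to a function f ∈ C^{N+1}, the detail coefficient at level L and position m admits the expansion γ^L_m = C_N · f^{(N)}(x^L_{m+1/2}) · h^N + O(h^{N+1}) with h = 2^{-(L+1)}, where C_N = -(1/N!)·∏_{j=-N/2+1}^{N/2}(1-2j)·(up to sign) is a nonzero constant independent of f, h, and m; in particular |γ^L_m| ≤ C'·‖f^{(N)}‖_∞·h^N. -/

import Mathlib

open Finset Polynomial

/-! ### Auxiliary lemmas -/

/-- For a globally `C^n` function, iterated derivatives within a uniquely
differentiable set agree with global iterated derivatives. -/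
lemma my_iteratedDerivWithin_eq {n m : ℕ} {f : ℝ → ℝ} {s : Set ℝ} {x : ℝ}
    (hf : ContDiff ℝ (n : ℕ∞) f) (hs : UniqueDiffOn ℝ s) (hx : x ∈ s) (hm : m ≤ n) :
    iteratedDerivWithin m f s x = iteratedDeriv m f x := by
  have h1 : HasFTaylorSeriesUpToOn (n : ℕ∞) f (ftaylorSeriesWithin ℝ f Set.univ) Set.univ :=
    (hf.contDiffOn).ftaylorSeriesWithin uniqueDiffOn_univ
  have h2 := (h1.mono (Set.subset_univ s)).eq_iteratedFDerivWithin_of_uniqueDiffOn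
      (by exact_mod_cast hm) hs hx
  rw [iteratedDerivWithin_eq_iteratedFDerivWithin, iteratedDeriv_eq_iteratedFDeriv, ← h2,
    ftaylorSeriesWithin_univ]
  rfl

/-- Taylor bound, forward direction. -/
lemma my_taylor_bound_nonneg {n : ℕ} {f : ℝ → ℝ} (hf : ContDiff ℝ ((n + 1 : ℕ) : ℕ∞) f)
    {M : ℝ} (hM : ∀ x, |iteratedDeriv (n + 1) f x| ≤ M) (t u : ℝ) (hu : 0 ≤ u) :
    |f (t + u) - ∑ i ∈ Finset.range (n + 1), iteratedDeriv i f t * u ^ i / i.factorial|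
      ≤ M * |u| ^ (n + 1) / n.factorial := by
  have hM0 : 0 ≤ M := le_trans (abs_nonneg _) (hM t)
  rcases eq_or_lt_of_le hu with h0 | hpos
  · subst h0
    have hsum : ∑ i ∈ Finset.range (n + 1),
        iteratedDeriv i f t * (0 : ℝ) ^ i / i.factorial = f t := by
      rw [Finset.sum_eq_single_of_mem 0 (Finset.mem_range.mpr n.succ_pos)]
      · simp [iteratedDeriv_zero]
      · intro i _ hi
        simp [zero_pow hi]
    rw [hsum]
    simp
  · set x := t + u with hx
    have hab : t ≤ x := by simp [hx]; linarith
    have hlt : t < x := by simp [hx]; linarith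
    have hud : UniqueDiffOn ℝ (Set.Icc t x) := uniqueDiffOn_Icc hlt
    have hcd : ContDiffOn ℝ ((n + 1 : ℕ) : ℕ∞) f (Set.Icc t x) := hf.contDiffOn
    have hC : ∀ y ∈ Set.Icc t x,
        ‖iteratedDerivWithin (n + 1) f (Set.Icc t x) y‖ ≤ M := by
      intro y hy
      rw [my_iteratedDerivWithin_eq hf hud hy (le_refl _), Real.norm_eq_abs]
      exact hM y
    have H := taylor_mean_remainder_bound (n := n) hab (by exact_mod_cast hcd)
      (Set.right_mem_Icc.mpr hab) hC
    rw [taylor_within_apply] at H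
    have hmem : t ∈ Set.Icc t x := Set.left_mem_Icc.mpr hab
    have hsum : ∑ k ∈ Finset.range (n + 1),
        (((k.factorial : ℝ))⁻¹ * (x - t) ^ k) • iteratedDerivWithin k f (Set.Icc t x) t
        = ∑ i ∈ Finset.range (n + 1), iteratedDeriv i f t * u ^ i / i.factorial := by
      refine Finset.sum_congr rfl fun i hi => ?_
      rw [my_iteratedDerivWithin_eq hf hud hmem (by
        exact_mod_cast Nat.le_of_lt_succ (Finset.mem_range.mp hi) |>.trans (Nat.le_succ n))]
      have hxt : x - t = u := by rw [hx]; ring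
      rw [hxt, smul_eq_mul]
      ring
    rw [hsum, Real.norm_eq_abs] at H
    have hxt : x - t = u := by rw [hx]; ring
    rw [hxt] at H
    rwa [abs_of_nonneg hu]

/-- Taylor bound with remainder estimate, both directions. -/
lemma my_taylor_bound {n : ℕ} {f : ℝ → ℝ} (hf : ContDiff ℝ ((n + 1 : ℕ) : ℕ∞) f)
    {M : ℝ} (hM : ∀ x, |iteratedDeriv (n + 1) f x| ≤ M) (t u : ℝ) :
    |f (t + u) - ∑ i ∈ Finset.range (n + 1), iteratedDeriv i f t * u ^ i / i.factorial|
      ≤ M * |u| ^ (n + 1) / n.factorial := by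
  rcases le_or_gt 0 u with hu | hu
  · exact my_taylor_bound_nonneg hf hM t u hu
  · -- reflect
    set g : ℝ → ℝ := fun y => f (2 * t - y) with hg
    have haff : ContDiff ℝ ((n + 1 : ℕ) : ℕ∞) (fun y : ℝ => 2 * t - y) :=
      (contDiff_const.sub contDiff_id)
    have hgc : ContDiff ℝ ((n + 1 : ℕ) : ℕ∞) g := hf.comp haff
    have hgd : ∀ (m : ℕ) (y : ℝ),
        iteratedDeriv m g y = (-1 : ℝ) ^ m * iteratedDeriv m f (2 * t - y) := by
      intro m y
      have h1 : g = fun z => (fun w => f (-w)) (z + -(2 * t)) := by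
        funext z; simp only [hg]; congr 1; ring
      rw [h1, iteratedDeriv_comp_add_const m (fun w => f (-w)) (-(2*t))]
      beta_reduce
      rw [iteratedDeriv_comp_neg]
      have : -(y + -(2 * t)) = 2 * t - y := by ring
      rw [this, smul_eq_mul]
    have hMg : ∀ x, |iteratedDeriv (n + 1) g x| ≤ M := by
      intro x
      rw [hgd, abs_mul, abs_pow, abs_neg, abs_one, one_pow, one_mul]
      exact hM _
    have H := my_taylor_bound_nonneg hgc hMg t (-u) (by linarith)
    have e1 : g (t + -u) = f (t + u) := by
      simp only [hg]; congr 1; ring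
    have e2 : ∑ i ∈ Finset.range (n + 1), iteratedDeriv i g t * (-u) ^ i / i.factorial
        = ∑ i ∈ Finset.range (n + 1), iteratedDeriv i f t * u ^ i / i.factorial := by
      refine Finset.sum_congr rfl fun i _ => ?_
      rw [hgd]
      have h2t : 2 * t - t = t := by ring
      rw [h2t]
      have : (-u) ^ i = (-1 : ℝ) ^ i * u ^ i := by rw [neg_pow]
      rw [this]
      have hone : (-1 : ℝ) ^ i * (-1 : ℝ) ^ i = 1 := by
        rw [← mul_pow]; norm_num
      calc (-1 : ℝ) ^ i * iteratedDeriv i f t * ((-1 : ℝ) ^ i * u ^ i) / i.factorial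
          = ((-1 : ℝ) ^ i * (-1 : ℝ) ^ i) * (iteratedDeriv i f t * u ^ i / i.factorial) := by
            ring
        _ = iteratedDeriv i f t * u ^ i / i.factorial := by rw [hone, one_mul]
    rw [e1, e2, abs_neg] at H
    exact H

section Lagrange

variable (N : ℕ)

/-- The node set. -/
private noncomputable def dcS : Finset ℤ := Finset.Icc (-(N : ℤ) / 2 + 1) ((N : ℤ) / 2)

/-- The nodes. -/
private def dcV : ℤ → ℝ := fun j => 2 * (j : ℝ) - 1

/-- The dual lifting (Lagrange) weights. -/
private noncomputable def dcW : ℤ → ℝ := fun j =>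
  ∏ k ∈ (dcS N).erase j, ((1 - 2 * (k : ℝ)) / (2 * (j : ℝ) - 2 * (k : ℝ)))

lemma dcS_card (hNeven : Even N) : (dcS N).card = N := by
  obtain ⟨m, rfl⟩ := hNeven
  rw [dcS, Int.card_Icc]
  push_cast
  omega

lemma dcV_injOn : Set.InjOn dcV (dcS N : Set ℤ) := by
  intro a _ b _ hab
  have : (a : ℝ) = (b : ℝ) := by
    simp only [dcV] at hab
    linarith
  exact_mod_cast this

lemma dcW_eq_basis_eval {j : ℤ} :
    dcW N j = (Lagrange.basis (dcS N) (dcV) j).eval 0 := by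
  rw [Lagrange.basis, eval_prod, dcW]
  refine Finset.prod_congr rfl fun k _ => ?_
  simp only [Lagrange.basisDivisor, eval_mul, eval_C, eval_sub, eval_X, dcV]
  rw [inv_mul_eq_div]
  congr 1 <;> ring

lemma dc_sum_pow_lt (hN : 0 < N) (hNeven : Even N) {i : ℕ} (hi : i < N) :
    ∑ j ∈ dcS N, dcW N j * (2 * (j : ℝ) - 1) ^ i = (0 : ℝ) ^ i := by
  have hvs := dcV_injOn N
  have hdeg : ((X : ℝ[X]) ^ i).degree < (dcS N).card := by
    rw [degree_X_pow, dcS_card N hNeven]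
    exact_mod_cast hi
  have h := Lagrange.eq_interpolate (v := dcV) hvs hdeg
  have h0 := congrArg (fun p => Polynomial.eval (0 : ℝ) p) h
  simp only [Lagrange.interpolate_apply, eval_finset_sum, eval_mul, eval_C, eval_pow,
    eval_X] at h0
  rw [h0]
  refine Finset.sum_congr rfl fun j hj => ?_
  rw [← dcW_eq_basis_eval]
  simp only [dcV]
  ring

lemma dc_sum_pow_eq (hN : 0 < N) (hNeven : Even N) :
    ∑ j ∈ dcS N, dcW N j * (2 * (j : ℝ) - 1) ^ N
      = -∏ k ∈ dcS N, (1 - 2 * (k : ℝ)) := by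
  have hvs := dcV_injOn N
  set p : ℝ[X] := ∏ k ∈ dcS N, (X - C (dcV k)) with hp
  have hpm : p.Monic := monic_prod_of_monic _ _ fun k _ => monic_X_sub_C _
  have hpd : p.degree = (N : WithBot ℕ) := by
    rw [hp, degree_prod]
    simp only [degree_X_sub_C]
    rw [Finset.sum_const, dcS_card N hNeven]
    simp
  set q : ℝ[X] := X ^ N - p with hq
  have hqd : q.degree < (dcS N).card := by
    rw [dcS_card N hNeven]
    refine lt_of_lt_of_le (degree_sub_lt ?_ (pow_ne_zero _ X_ne_zero) ?_) ?_
    · rw [degree_X_pow, hpd]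
    · rw [leadingCoeff_X_pow, hpm.leadingCoeff]
    · exact le_of_eq (degree_X_pow N)
  have h := Lagrange.eq_interpolate (v := dcV) hvs hqd
  have h0 := congrArg (fun r => Polynomial.eval (0 : ℝ) r) h
  have hpz : ∀ j ∈ dcS N, Polynomial.eval (dcV j) p = 0 := by
    intro j hj
    rw [hp, eval_prod]
    refine Finset.prod_eq_zero hj ?_
    simp
  have hqz : ∀ j ∈ dcS N, Polynomial.eval (dcV j) q = (2 * (j : ℝ) - 1) ^ N := by
    intro j hj
    rw [hq, eval_sub, eval_pow, eval_X, hpz j hj, sub_zero, dcV]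
  have hq0 : Polynomial.eval (0 : ℝ) q = -∏ k ∈ dcS N, (1 - 2 * (k : ℝ)) := by
    rw [hq, eval_sub, eval_pow, eval_X, zero_pow hN.ne', zero_sub, hp, eval_prod]
    congr 1
    refine Finset.prod_congr rfl fun k _ => ?_
    simp [dcV]
  simp only [Lagrange.interpolate_apply, eval_finset_sum, eval_mul, eval_C] at h0
  rw [hq0] at h0
  rw [h0]
  refine Finset.sum_congr rfl fun j hj => ?_
  rw [hqz j hj, ← dcW_eq_basis_eval]
  ring

end Lagrange

lemma dc_prod_ne_zero (N : ℕ) : (∏ k ∈ dcS N, (1 - 2 * (k : ℝ))) ≠ 0 := by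
  rw [Finset.prod_ne_zero_iff]
  intro k _ hk
  have h1 : ((1 - 2 * k : ℤ) : ℝ) = 0 := by push_cast; linarith
  have h2 : (1 - 2 * k : ℤ) = 0 := by exact_mod_cast h1
  omega

lemma dc_node_bound (N : ℕ) : ∀ j ∈ dcS N, |2 * (j : ℝ) - 1| ≤ 2 * (N : ℝ) + 1 := by
  intro j hj
  rw [dcS, Finset.mem_Icc] at hj
  have h1 : -(2 * (N : ℤ) + 1) ≤ 2 * j - 1 ∧ 2 * j - 1 ≤ 2 * (N : ℤ) + 1 := by omega
  rw [abs_le]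
  constructor
  · exact_mod_cast h1.1
  · exact_mod_cast h1.2

lemma dc_weighted_lt (N : ℕ) (hN : 0 < N) (hNeven : Even N) (D : ℕ → ℝ) (h : ℝ) :
    ∑ j ∈ dcS N, dcW N j *
      (∑ i ∈ Finset.range N, D i * ((2 * (j : ℝ) - 1) * h) ^ i / i.factorial) = D 0 := by
  have hswap : ∑ j ∈ dcS N, dcW N j *
      (∑ i ∈ Finset.range N, D i * ((2 * (j : ℝ) - 1) * h) ^ i / i.factorial)
      = ∑ i ∈ Finset.range N, (D i * h ^ i / i.factorial)
          * ∑ j ∈ dcS N, dcW N j * (2 * (j : ℝ) - 1) ^ i := by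
    simp_rw [Finset.mul_sum]
    rw [Finset.sum_comm]
    refine Finset.sum_congr rfl fun i _ => Finset.sum_congr rfl fun j _ => ?_
    rw [mul_pow]; ring
  rw [hswap,
    Finset.sum_congr rfl fun i hi => by
      rw [dc_sum_pow_lt N hN hNeven (Finset.mem_range.mp hi)],
    Finset.sum_eq_single_of_mem 0 (Finset.mem_range.mpr hN)]
  · simp
  · intro i _ hi; rw [zero_pow hi, mul_zero]

lemma dc_weighted_eq (N : ℕ) (hN : 0 < N) (hNeven : Even N) (D : ℕ → ℝ) (h : ℝ) :
    ∑ j ∈ dcS N, dcW N j *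
      (∑ i ∈ Finset.range (N + 1), D i * ((2 * (j : ℝ) - 1) * h) ^ i / i.factorial)
    = D 0 - (∏ k ∈ dcS N, (1 - 2 * (k : ℝ))) / N.factorial * D N * h ^ N := by
  have hsplit : ∀ j : ℤ, ∑ i ∈ Finset.range (N + 1), D i * ((2 * (j : ℝ) - 1) * h) ^ i / i.factorial
      = (∑ i ∈ Finset.range N, D i * ((2 * (j : ℝ) - 1) * h) ^ i / i.factorial)
        + D N * ((2 * (j : ℝ) - 1) * h) ^ N / N.factorial := fun j => Finset.sum_range_succ _ N
  simp_rw [hsplit, mul_add, Finset.sum_add_distrib]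
  rw [dc_weighted_lt N hN hNeven D h]
  have h2 : ∑ j ∈ dcS N, dcW N j * (D N * ((2 * (j : ℝ) - 1) * h) ^ N / N.factorial)
      = (D N * h ^ N / N.factorial) * ∑ j ∈ dcS N, dcW N j * (2 * (j : ℝ) - 1) ^ N := by
    rw [Finset.mul_sum]
    refine Finset.sum_congr rfl fun j _ => ?_
    rw [mul_pow]; ring
  rw [h2, dc_sum_pow_eq N hN hNeven]
  ring

open Finset in
/-- Leading-order Taylor expansion of the detail coefficient of the `N`-th order interpolating
wavelet: `γ = C_N f^{(N)}(t) h^N + O(h^{N+1})` with a nonzero constant `C_N` (of absolute value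
`|∏ (1-2j)|/N!`) independent of `f`, `h` and the position, and `|γ| ≤ C'' ‖f^{(N)}‖_∞ h^N`. -/
theorem detail_coefficient_expansion (N : ℕ) (hN : 0 < N) (hNeven : Even N) :
    ∃ C : ℝ, C ≠ 0 ∧
      |C| = (1 / (N.factorial : ℝ))
        * |∏ j ∈ Finset.Icc (-(N : ℤ) / 2 + 1) ((N : ℤ) / 2), (1 - 2 * (j : ℝ))| ∧
      ∃ C' C'' : ℝ,
        ∀ f : ℝ → ℝ, ContDiff ℝ (N + 1) f →
        ∀ M M' : ℝ,
          (∀ x, |iteratedDeriv (N + 1) f x| ≤ M) →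
          (∀ x, |iteratedDeriv N f x| ≤ M') →
          ∀ t h : ℝ, 0 < h →
            |(f t - ∑ j ∈ Finset.Icc (-(N : ℤ) / 2 + 1) ((N : ℤ) / 2),
                (∏ k ∈ (Finset.Icc (-(N : ℤ) / 2 + 1) ((N : ℤ) / 2)).erase j,
                  ((1 - 2 * (k : ℝ)) / (2 * (j : ℝ) - 2 * (k : ℝ))))
                  * f (t + (2 * (j : ℝ) - 1) * h))
              - C * iteratedDeriv N f t * h ^ N| ≤ C' * M * h ^ (N + 1)
            ∧ |f t - ∑ j ∈ Finset.Icc (-(N : ℤ) / 2 + 1) ((N : ℤ) / 2),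
                (∏ k ∈ (Finset.Icc (-(N : ℤ) / 2 + 1) ((N : ℤ) / 2)).erase j,
                  ((1 - 2 * (k : ℝ)) / (2 * (j : ℝ) - 2 * (k : ℝ))))
                  * f (t + (2 * (j : ℝ) - 1) * h)| ≤ C'' * M' * h ^ N := by
  obtain ⟨n, rfl⟩ : ∃ n, N = n + 1 := ⟨N - 1, by omega⟩
  set Pn : ℝ := ∏ k ∈ dcS (n + 1), (1 - 2 * (k : ℝ)) with hPn
  set K : ℝ := 2 * ((n + 1 : ℕ) : ℝ) + 1 with hK
  set B : ℝ := ∑ j ∈ dcS (n + 1), |dcW (n + 1) j| with hB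
  refine ⟨Pn / ((n + 1).factorial : ℝ),
    div_ne_zero (dc_prod_ne_zero _) (Nat.cast_ne_zero.mpr (Nat.factorial_ne_zero _)), ?_,
    B * K ^ (n + 2) / ((n + 1).factorial : ℝ),
    B * K ^ (n + 1) / (n.factorial : ℝ), ?_⟩
  · show |Pn / ((n + 1).factorial : ℝ)| = 1 / ((n + 1).factorial : ℝ) * |Pn|
    rw [abs_div, Nat.abs_cast]
    ring
  · intro f hf M M' hM hM' t h hh
    have hf1 : ContDiff ℝ ((n + 1 + 1 : ℕ) : ℕ∞) f := by exact_mod_cast hf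
    have hf2 : ContDiff ℝ ((n + 1 : ℕ) : ℕ∞) f :=
      hf1.of_le (by exact_mod_cast Nat.le_succ (n + 1))
    have hM0 : (0 : ℝ) ≤ M := le_trans (abs_nonneg _) (hM t)
    have hM'0 : (0 : ℝ) ≤ M' := le_trans (abs_nonneg _) (hM' t)
    have hnode : ∀ j ∈ dcS (n + 1), |2 * (j : ℝ) - 1| ≤ K := by
      intro j hj
      rw [hK]
      exact dc_node_bound (n + 1) j hj
    have hK0 : (0 : ℝ) ≤ K := by
      rw [hK]; positivity
    have habs : ∀ j ∈ dcS (n + 1), |(2 * (j : ℝ) - 1) * h| ≤ K * h := by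
      intro j hj
      rw [abs_mul, abs_of_pos hh]
      exact mul_le_mul_of_nonneg_right (hnode j hj) hh.le
    constructor
    · -- first bound
      have hR : ∀ j ∈ dcS (n + 1),
          |f (t + (2 * (j : ℝ) - 1) * h) - ∑ i ∈ Finset.range (n + 1 + 1),
            iteratedDeriv i f t * ((2 * (j : ℝ) - 1) * h) ^ i / i.factorial|
          ≤ M * (K * h) ^ (n + 1 + 1) / ((n + 1).factorial : ℝ) := by
        intro j hj
        refine le_trans (my_taylor_bound hf1 hM t ((2 * (j : ℝ) - 1) * h)) ?_
        gcongr
        exact habs j hj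
      have hA : ∑ j ∈ dcS (n + 1), dcW (n + 1) j * (∑ i ∈ Finset.range (n + 1 + 1),
            iteratedDeriv i f t * ((2 * (j : ℝ) - 1) * h) ^ i / i.factorial)
          = f t - Pn / ((n + 1).factorial : ℝ) * iteratedDeriv (n + 1) f t * h ^ (n + 1) := by
        have := dc_weighted_eq (n + 1) n.succ_pos hNeven (fun i => iteratedDeriv i f t) h
        simp only [iteratedDeriv_zero] at this
        rw [← hPn] at this
        exact this
      have hSR : ∑ j ∈ dcS (n + 1), dcW (n + 1) j *
            (f (t + (2 * (j : ℝ) - 1) * h) - ∑ i ∈ Finset.range (n + 1 + 1),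
              iteratedDeriv i f t * ((2 * (j : ℝ) - 1) * h) ^ i / i.factorial)
          = (∑ j ∈ dcS (n + 1), dcW (n + 1) j * f (t + (2 * (j : ℝ) - 1) * h))
            - ∑ j ∈ dcS (n + 1), dcW (n + 1) j * (∑ i ∈ Finset.range (n + 1 + 1),
              iteratedDeriv i f t * ((2 * (j : ℝ) - 1) * h) ^ i / i.factorial) := by
        rw [← Finset.sum_sub_distrib]
        exact Finset.sum_congr rfl fun j _ => by ring
      have hkey : (f t - ∑ j ∈ dcS (n + 1), dcW (n + 1) j * f (t + (2 * (j : ℝ) - 1) * h))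
            - Pn / ((n + 1).factorial : ℝ) * iteratedDeriv (n + 1) f t * h ^ (n + 1)
          = -∑ j ∈ dcS (n + 1), dcW (n + 1) j *
            (f (t + (2 * (j : ℝ) - 1) * h) - ∑ i ∈ Finset.range (n + 1 + 1),
              iteratedDeriv i f t * ((2 * (j : ℝ) - 1) * h) ^ i / i.factorial) := by
        rw [hSR, hA]; ring
      show |(f t - ∑ j ∈ dcS (n + 1), dcW (n + 1) j * f (t + (2 * (j : ℝ) - 1) * h))
            - Pn / ((n + 1).factorial : ℝ) * iteratedDeriv (n + 1) f t * h ^ (n + 1)|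
          ≤ B * K ^ (n + 2) / ((n + 1).factorial : ℝ) * M * h ^ (n + 1 + 1)
      calc |(f t - ∑ j ∈ dcS (n + 1), dcW (n + 1) j * f (t + (2 * (j : ℝ) - 1) * h))
            - Pn / ((n + 1).factorial : ℝ) * iteratedDeriv (n + 1) f t * h ^ (n + 1)|
          = |∑ j ∈ dcS (n + 1), dcW (n + 1) j *
              (f (t + (2 * (j : ℝ) - 1) * h) - ∑ i ∈ Finset.range (n + 1 + 1),
                iteratedDeriv i f t * ((2 * (j : ℝ) - 1) * h) ^ i / i.factorial)| := by
            rw [hkey, abs_neg]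
        _ ≤ ∑ j ∈ dcS (n + 1), |dcW (n + 1) j *
              (f (t + (2 * (j : ℝ) - 1) * h) - ∑ i ∈ Finset.range (n + 1 + 1),
                iteratedDeriv i f t * ((2 * (j : ℝ) - 1) * h) ^ i / i.factorial)| :=
            Finset.abs_sum_le_sum_abs _ _
        _ ≤ ∑ j ∈ dcS (n + 1), |dcW (n + 1) j| *
              (M * (K * h) ^ (n + 1 + 1) / ((n + 1).factorial : ℝ)) := by
            refine Finset.sum_le_sum fun j hj => ?_
            rw [abs_mul]
            exact mul_le_mul_of_nonneg_left (hR j hj) (abs_nonneg _)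
        _ = B * (M * (K * h) ^ (n + 1 + 1) / ((n + 1).factorial : ℝ)) := by
            rw [hB, Finset.sum_mul]
        _ = B * K ^ (n + 2) / ((n + 1).factorial : ℝ) * M * h ^ (n + 1 + 1) := by
            rw [mul_pow]; ring
    · -- second bound
      have hR : ∀ j ∈ dcS (n + 1),
          |f (t + (2 * (j : ℝ) - 1) * h) - ∑ i ∈ Finset.range (n + 1),
            iteratedDeriv i f t * ((2 * (j : ℝ) - 1) * h) ^ i / i.factorial|
          ≤ M' * (K * h) ^ (n + 1) / (n.factorial : ℝ) := by
        intro j hj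
        refine le_trans (my_taylor_bound hf2 hM' t ((2 * (j : ℝ) - 1) * h)) ?_
        gcongr
        exact habs j hj
      have hA : ∑ j ∈ dcS (n + 1), dcW (n + 1) j * (∑ i ∈ Finset.range (n + 1),
            iteratedDeriv i f t * ((2 * (j : ℝ) - 1) * h) ^ i / i.factorial) = f t := by
        have := dc_weighted_lt (n + 1) n.succ_pos hNeven (fun i => iteratedDeriv i f t) h
        simp only [iteratedDeriv_zero] at this
        exact this
      have hSR : ∑ j ∈ dcS (n + 1), dcW (n + 1) j *
            (f (t + (2 * (j : ℝ) - 1) * h) - ∑ i ∈ Finset.range (n + 1),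
              iteratedDeriv i f t * ((2 * (j : ℝ) - 1) * h) ^ i / i.factorial)
          = (∑ j ∈ dcS (n + 1), dcW (n + 1) j * f (t + (2 * (j : ℝ) - 1) * h))
            - ∑ j ∈ dcS (n + 1), dcW (n + 1) j * (∑ i ∈ Finset.range (n + 1),
              iteratedDeriv i f t * ((2 * (j : ℝ) - 1) * h) ^ i / i.factorial) := by
        rw [← Finset.sum_sub_distrib]
        exact Finset.sum_congr rfl fun j _ => by ring
      have hkey : f t - ∑ j ∈ dcS (n + 1), dcW (n + 1) j * f (t + (2 * (j : ℝ) - 1) * h)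
          = -∑ j ∈ dcS (n + 1), dcW (n + 1) j *
            (f (t + (2 * (j : ℝ) - 1) * h) - ∑ i ∈ Finset.range (n + 1),
              iteratedDeriv i f t * ((2 * (j : ℝ) - 1) * h) ^ i / i.factorial) := by
        rw [hSR, hA]; ring
      show |f t - ∑ j ∈ dcS (n + 1), dcW (n + 1) j * f (t + (2 * (j : ℝ) - 1) * h)|
          ≤ B * K ^ (n + 1) / (n.factorial : ℝ) * M' * h ^ (n + 1)
      calc |f t - ∑ j ∈ dcS (n + 1), dcW (n + 1) j * f (t + (2 * (j : ℝ) - 1) * h)|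
          = |∑ j ∈ dcS (n + 1), dcW (n + 1) j *
              (f (t + (2 * (j : ℝ) - 1) * h) - ∑ i ∈ Finset.range (n + 1),
                iteratedDeriv i f t * ((2 * (j : ℝ) - 1) * h) ^ i / i.factorial)| := by
            rw [hkey, abs_neg]
        _ ≤ ∑ j ∈ dcS (n + 1), |dcW (n + 1) j *
              (f (t + (2 * (j : ℝ) - 1) * h) - ∑ i ∈ Finset.range (n + 1),
                iteratedDeriv i f t * ((2 * (j : ℝ) - 1) * h) ^ i / i.factorial)| :=
            Finset.abs_sum_le_sum_abs _ _
        _ ≤ ∑ j ∈ dcS (n + 1), |dcW (n + 1) j| *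
              (M' * (K * h) ^ (n + 1) / (n.factorial : ℝ)) := by
            refine Finset.sum_le_sum fun j hj => ?_
            rw [abs_mul]
            exact mul_le_mul_of_nonneg_left (hR j hj) (abs_nonneg _)
        _ = B * (M' * (K * h) ^ (n + 1) / (n.factorial : ℝ)) := by
            rw [hB, Finset.sum_mul]
        _ = B * K ^ (n + 1) / (n.factorial : ℝ) * M' * h ^ (n + 1) := by
            rw [mul_pow]; ring
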